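/- Let G be a 2-connected simple graph of order n. Then G contains a cycle passing through all vertices of degree at least n/2. -/

import Mathlib

set_option linter.unusedSectionVars false
set_option maxHeartbeats 1600000

open SimpleGraph Walk

/-- A graph is `2`-connected if it has at least `3` vertices and deleting
any single vertex leaves a connected graph. -/
def SimpleGraph.TwoConnected {V : Type*} [Fintype V] (G : SimpleGraph V) : Prop :=
  3 ≤ Fintype.card V ∧ ∀ v : V, (G.induce {w : V | w ≠ v}).Connected

section ShiProof

variable {V : Type*} [Fintype V] [DecidableEq V]

lemma walk_avoid {H : SimpleGraph V} {u x y : V}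
    (hc : (H.induce {w : V | w ≠ u}).Connected) (hx : x ≠ u) (hy : y ≠ u) :
    ∃ p : H.Walk x y, u ∉ p.support := by
  obtain ⟨q⟩ := hc.preconnected ⟨x, hx⟩ ⟨y, hy⟩
  refine ⟨q.map (SimpleGraph.Embedding.induce _).toHom, ?_⟩
  refine fun h => (?_ : u ∉ q.support.map (SimpleGraph.Embedding.induce {w : V | w ≠ u}).toHom)
    (Eq.mp (congrArg (u ∈ ·) (Walk.support_map _ q)) h)
  rintro hmem
  simp only [List.mem_map] at hmem
  obtain ⟨⟨z, hz⟩, _, hzu⟩ := hmem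
  exact hz hzu

lemma exists_third (h3 : 3 ≤ Fintype.card V) (a b : V) : ∃ z : V, z ≠ a ∧ z ≠ b := by
  by_contra hcon
  push_neg at hcon
  have hsub : (Finset.univ : Finset V) ⊆ {a, b} := by
    intro z _
    rcases em (z = a) with rfl | hza
    · simp
    · simp [hcon z hza]
  have hc2 : (Finset.univ : Finset V).card ≤ 2 :=
    (Finset.card_le_card hsub).trans ((Finset.card_insert_le _ _).trans (by simp))
  rw [Finset.card_univ] at hc2
  omega

lemma twoConnected_mono {G H : SimpleGraph V} (hle : G ≤ H) (h2 : G.TwoConnected) :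
    H.TwoConnected := by
  refine ⟨h2.1, fun v => (h2.2 v).mono ?_⟩
  intro a b hab
  exact hle hab

/-- every vertex has a neighbor different from any prescribed vertex -/
lemma exists_adj_ne {H : SimpleGraph V} (h2 : H.TwoConnected) {v u : V} (hu : u ≠ v) :
    ∃ w : V, H.Adj v w ∧ w ≠ u := by
  obtain ⟨z, hzu, hzv⟩ := exists_third h2.1 u v
  obtain ⟨q⟩ := (h2.2 u).preconnected ⟨v, hu.symm⟩ ⟨z, hzu⟩
  cases q with
  | nil => exact absurd rfl hzv
  | @cons _ b _ h q =>
    refine ⟨b.1, ?_, b.2⟩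
    simpa [SimpleGraph.comap_adj] using h

/-- If a path ending at `u` contains the edge `u‑v`, it decomposes as a walk to `v`
followed by that edge. -/
lemma path_concat_of_mem_edges {H : SimpleGraph V} {a u v : V} (p : H.Walk a u)
    (hp : p.IsPath) (he : s(u, v) ∈ p.edges) :
    ∃ (q : H.Walk a v) (h : H.Adj v u), p = q.concat h := by
  induction p with
  | nil => simp at he
  | @cons x c u h₁ q ih =>
    rw [Walk.edges_cons, List.mem_cons] at he
    rcases he with he | he
    · rw [Sym2.eq_iff] at he
      rcases he with ⟨rfl, rfl⟩ | ⟨rfl, rfl⟩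
      · exact absurd (Walk.isPath_iff_eq_nil.mp hp) (by simp)
      · have hq : q = Walk.nil := by
          have := hp.of_cons
          exact Walk.isPath_iff_eq_nil.mp this
        subst hq
        exact ⟨Walk.nil, h₁, by simp [Walk.concat_nil]⟩
    · obtain ⟨q₂, h₂, rfl⟩ := ih hp.of_cons he
      exact ⟨Walk.cons h₁ q₂, h₂, by rw [Walk.concat_cons]⟩

/-- The edge joining the endpoints is not an edge of a path of length ≥ 2. -/
lemma endpoints_edge_not_mem {H : SimpleGraph V} {a b : V} {p : H.Walk a b}
    (hp : p.IsPath) (hlen : 2 ≤ p.length) : s(b, a) ∉ p.edges := by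
  intro he
  obtain ⟨q, h, rfl⟩ := path_concat_of_mem_edges p hp he
  have hq : q.IsPath := by
    apply Walk.IsPath.mk'
    have := hp.support_nodup
    rw [Walk.support_concat] at this
    exact (List.nodup_append.mp (by simpa using this)).1
  have : q = Walk.nil := Walk.isPath_iff_eq_nil.mp hq
  subst this
  simp [Walk.concat_nil] at hlen

lemma exists_walk_of_chain {H : SimpleGraph V} :
    ∀ (l : List V) (a b : V), List.Chain H.Adj a l →
      (a :: l).getLast (List.cons_ne_nil _ _) = b → ∃ w : H.Walk a b, w.support = a :: l := by
  intro l
  induction l with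
  | nil =>
    intro a b _ hb
    simp only [List.getLast_singleton] at hb
    subst hb
    exact ⟨Walk.nil, by simp⟩
  | cons c t ih =>
    intro a b hch hb
    rw [List.Chain, List.isChain_cons_cons] at hch
    have hb' : (c :: t).getLast (List.cons_ne_nil _ _) = b := by
      rwa [List.getLast_cons (List.cons_ne_nil _ _)] at hb
    obtain ⟨w', hw'⟩ := ih c b hch.2 hb'
    exact ⟨Walk.cons hch.1 w', by simp [hw']⟩

/-- A clique of size ≥ 3 lies on a common cycle. -/
lemma cycle_of_clique {H : SimpleGraph V} {T : Finset V} (hcard : 3 ≤ T.card)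
    (hclq : ∀ x ∈ T, ∀ y ∈ T, x ≠ y → H.Adj x y) :
    ∃ (a : V) (c : H.Walk a a), c.IsCycle ∧ ∀ x ∈ T, x ∈ c.support := by
  set l := T.toList with hl
  have hnd : l.Nodup := T.nodup_toList
  have hmem : ∀ x, x ∈ l ↔ x ∈ T := fun x => Finset.mem_toList
  have hlen : l.length = T.card := T.length_toList
  obtain ⟨a, t, hat⟩ : ∃ a t, l = a :: t := by
    cases hll : l with
    | nil => rw [hll] at hlen; simp at hlen; omega
    | cons a t => exact ⟨a, t, rfl⟩
  have hpw : l.Pairwise H.Adj := by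
    refine List.Pairwise.imp_of_mem ?_ hnd
    intro x y hx hy hxy
    exact hclq x ((hmem x).mp hx) y ((hmem y).mp hy) hxy
  have hch : List.Chain H.Adj a t := by
    have := hpw.isChain
    rw [hat] at this
    exact this
  set b := (a :: t).getLast (List.cons_ne_nil _ _) with hbdef
  obtain ⟨w, hw⟩ := exists_walk_of_chain t a b hch rfl
  have hwp : w.IsPath := Walk.IsPath.mk' (by rw [hw, ← hat]; exact hnd)
  have htne : t ≠ [] := by
    intro h; rw [h] at hat; rw [hat] at hlen; simp at hlen; omega
  have hbt : b ∈ t := by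
    rw [hbdef, List.getLast_cons htne]
    exact List.getLast_mem _
  have hba : b ≠ a := by
    intro h
    rw [hat] at hnd
    exact (List.nodup_cons.mp hnd).1 (h ▸ hbt)
  have haT : a ∈ T := (hmem a).mp (by rw [hat]; simp)
  have hbT : b ∈ T := (hmem b).mp (by rw [hat]; simp [hbt])
  have hadj : H.Adj b a := hclq b hbT a haT hba
  have hwlen : 2 ≤ w.length := by
    have := congr_arg List.length hw
    rw [Walk.length_support] at this
    rw [hat] at hlen
    simp only [List.length_cons] at this hlen
    omega
  have he : s(b, a) ∉ w.edges := endpoints_edge_not_mem hwp hwlen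
  refine ⟨b, Walk.cons hadj w, SimpleGraph.Path.cons_isCycle ⟨w, hwp⟩ hadj he, ?_⟩
  intro x hx
  rw [Walk.support_cons, hw, ← hat]
  right
  exact (hmem x).mpr hx

/-- a cycle through a prescribed vertex -/
lemma cycle_through_vertex {H : SimpleGraph V} (h2 : H.TwoConnected) (u : V) :
    ∃ (a : V) (c : H.Walk a a), c.IsCycle ∧ u ∈ c.support := by
  obtain ⟨t, ht, -⟩ := exists_third h2.1 u u
  obtain ⟨p, hpu, hpt⟩ := exists_adj_ne h2 (v := u) (u := t) ht
  obtain ⟨q, hqu, hqp⟩ := exists_adj_ne h2 (v := u) (u := p) hpu.ne'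
  obtain ⟨W, hW⟩ := walk_avoid (h2.2 u) hqu.ne' hpu.ne'
  set P := W.bypass with hPdef
  have hPpath : P.IsPath := W.bypass_isPath
  have hPu : u ∉ P.support := fun h => hW (W.support_bypass_subset h)
  set R : H.Walk q u := P.concat hpu.symm with hRdef
  have hRpath : R.IsPath := by
    apply Walk.IsPath.mk'
    rw [hRdef, Walk.support_concat, List.nodup_append']
    exact ⟨hPpath.support_nodup, List.nodup_singleton _, by simpa using hPu⟩
  have he : s(u, q) ∉ R.edges := by
    rw [hRdef, Walk.edges_concat, List.concat_eq_append]
    intro h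
    rcases List.mem_append.mp h with h | h
    · exact hPu (Walk.fst_mem_support_of_mem_edges P h)
    · simp only [List.mem_singleton, Sym2.eq_iff] at h
      rcases h with ⟨h1, h2⟩ | ⟨h1, h2⟩
      · exact hpu.ne h1
      · exact hqp h2
  exact ⟨u, Walk.cons hqu R, SimpleGraph.Path.cons_isCycle ⟨R, hRpath⟩ hqu he, by simp⟩

/-- deleting one edge of a 2-connected graph leaves it connected -/
lemma deleteEdge_connected {H : SimpleGraph V} (h2 : H.TwoConnected) {u w : V} (huw : u ≠ w) :
    (H.deleteEdges {s(u, w)}).Connected := by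
  set K := H.deleteEdges {s(u, w)} with hK
  have hne : Nonempty V := Fintype.card_pos_iff.mp (by have := h2.1; omega)
  obtain ⟨z, hzu, hzw⟩ := exists_third h2.1 u w
  have key : ∀ x : V, K.Reachable x z := by
    intro x
    rcases em (x = w) with rfl | hxw
    · -- avoid u
      obtain ⟨p, hp⟩ := walk_avoid (h2.2 u) huw.symm hzu
      refine ⟨p.transfer K ?_⟩
      intro e he
      rw [hK, SimpleGraph.edgeSet_deleteEdges]
      refine ⟨p.edges_subset_edgeSet he, ?_⟩
      intro hmem
      rw [Set.mem_singleton_iff] at hmem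
      subst hmem
      exact hp (Walk.fst_mem_support_of_mem_edges p he)
    · -- avoid w
      obtain ⟨p, hp⟩ := walk_avoid (h2.2 w) hxw hzw
      refine ⟨p.transfer K ?_⟩
      intro e he
      rw [hK, SimpleGraph.edgeSet_deleteEdges]
      refine ⟨p.edges_subset_edgeSet he, ?_⟩
      intro hmem
      rw [Set.mem_singleton_iff] at hmem
      subst hmem
      exact hp (Walk.snd_mem_support_of_mem_edges p he)
  rw [connected_iff]
  exact ⟨fun x y => (key x).trans (key y).symm, hne⟩

/-- a cycle through two adjacent vertices -/
lemma cycle_through_two {H : SimpleGraph V} (h2 : H.TwoConnected) {u w : V}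
    (hadj : H.Adj u w) :
    ∃ (a : V) (c : H.Walk a a), c.IsCycle ∧ u ∈ c.support ∧ w ∈ c.support := by
  set K := H.deleteEdges {s(u, w)} with hK
  have hkc : K.Connected := deleteEdge_connected h2 hadj.ne
  obtain ⟨W⟩ := hkc.preconnected u w
  set P₀ := W.bypass with hP₀
  have hP₀path : P₀.IsPath := W.bypass_isPath
  have hsub : ∀ e ∈ P₀.edges, e ∈ H.edgeSet := by
    intro e he
    have := P₀.edges_subset_edgeSet he
    rw [hK, SimpleGraph.edgeSet_deleteEdges] at this
    exact this.1
  set P : H.Walk u w := P₀.transfer H hsub with hPdef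
  have hPpath : P.IsPath := hP₀path.transfer hsub
  have he : s(w, u) ∉ P.edges := by
    rw [hPdef, Walk.edges_transfer]
    intro h
    have := P₀.edges_subset_edgeSet h
    rw [hK, SimpleGraph.edgeSet_deleteEdges] at this
    exact this.2 (by rw [Sym2.eq_swap]; rfl)
  refine ⟨w, Walk.cons hadj.symm P, SimpleGraph.Path.cons_isCycle ⟨P, hPpath⟩ hadj.symm he, ?_, ?_⟩
  · simp
  · rw [Walk.support_cons]
    right
    exact P.end_mem_support

lemma exists_dart_fst {H : SimpleGraph V} {a b x : V} (p : H.Walk a b)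
    (hx : x ∈ p.support) (hxb : x ≠ b) : ∃ d ∈ p.darts, d.fst = x := by
  induction p with
  | nil => simp at hx; exact absurd hx hxb
  | @cons s c t h q ih =>
    rw [Walk.support_cons, List.mem_cons] at hx
    rcases hx with rfl | hx
    · exact ⟨⟨(x, c), h⟩, by simp, rfl⟩
    · obtain ⟨d, hd, hdx⟩ := ih hx hxb
      exact ⟨d, by simp [hd], hdx⟩

lemma split_at_dart {H : SimpleGraph V} {a b : V} (p : H.Walk a b) {d : H.Dart}
    (hd : d ∈ p.darts) :
    ∃ (p₁ : H.Walk a d.fst) (p₂ : H.Walk d.snd b), p = p₁.append (Walk.cons d.adj p₂) := by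
  induction p with
  | nil => simp at hd
  | @cons s c t h q ih =>
    rw [Walk.darts_cons, List.mem_cons] at hd
    rcases hd with rfl | hd
    · exact ⟨Walk.nil, q, by simp⟩
    · obtain ⟨q₁, q₂, hq⟩ := ih hd
      exact ⟨Walk.cons h q₁, q₂, by rw [Walk.cons_append, hq]⟩

/-- The core rotation lemma (Ore/Bondy–Chvátal style): from a path between
nonadjacent vertices of large degree sum covering `S`, get a cycle covering it. -/
lemma shi_rotation {H : SimpleGraph V} [DecidableRel H.Adj] {u v : V} (P : H.Walk u v)
    (hP : P.IsPath) (hne : u ≠ v) (hnadj : ¬H.Adj u v)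
    (hdeg : Fintype.card V ≤ H.degree u + H.degree v) :
    ∃ (a : V) (c : H.Walk a a), c.IsCycle ∧ ∀ x ∈ P.support, x ∈ c.support := by
  classical
  rcases em (∃ w : V, w ∉ P.support ∧ H.Adj u w ∧ H.Adj v w) with ⟨w, hw, huw, hvw⟩ | hno
  · -- common neighbor off the path
    set Q : H.Walk w u := Walk.cons hvw.symm P.reverse with hQ
    have hQpath : Q.IsPath := by
      apply Walk.IsPath.mk'
      rw [hQ, Walk.support_cons, List.nodup_cons, Walk.support_reverse]
      exact ⟨by simpa using hw, by simpa using hP.support_nodup⟩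
    have he : s(u, w) ∉ Q.edges := by
      rw [hQ, Walk.edges_cons]
      intro hmem
      rcases List.mem_cons.mp hmem with hmem | hmem
      · rw [Sym2.eq_iff] at hmem
        rcases hmem with ⟨rfl, h2⟩ | ⟨rfl, -⟩
        · exact huw.ne rfl
        · exact hne rfl
      · rw [Walk.edges_reverse, List.mem_reverse] at hmem
        exact hw (Walk.snd_mem_support_of_mem_edges P hmem)
    refine ⟨u, Walk.cons huw Q, SimpleGraph.Path.cons_isCycle ⟨Q, hQpath⟩ huw he, ?_⟩
    intro x hx
    rw [Walk.support_cons, hQ, Walk.support_cons, Walk.support_reverse]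
    simp only [List.mem_cons, List.mem_reverse]
    right; right; exact hx
  · -- pigeonhole
    push_neg at hno
    set sp := P.support.toFinset with hsp
    have hspcard : sp.card = P.length + 1 := by
      rw [hsp, List.toFinset_card_of_nodup hP.support_nodup, Walk.length_support]
    set A := H.neighborFinset v ∩ sp with hA
    set B := H.neighborFinset u ∩ sp with hB
    set Ov := H.neighborFinset v \ sp with hOv
    set Ou := H.neighborFinset u \ sp with hOu
    have hAv : A.card + Ov.card = H.degree v := by
      rw [hA, hOv, Finset.card_inter_add_card_sdiff]; rfl
    have hBu : B.card + Ou.card = H.degree u := by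
      rw [hB, hOu, Finset.card_inter_add_card_sdiff]; rfl
    have hdisj : Disjoint Ou Ov := by
      rw [Finset.disjoint_left]
      intro w hwu hwv
      rw [hOu, Finset.mem_sdiff, SimpleGraph.mem_neighborFinset] at hwu
      rw [hOv, Finset.mem_sdiff, SimpleGraph.mem_neighborFinset] at hwv
      have hwns : w ∉ P.support := by
        intro hc
        exact hwu.2 (by rw [hsp, List.mem_toFinset]; exact hc)
      exact hno w hwns hwu.1 hwv.1
    have hOle : Ou.card + Ov.card ≤ Fintype.card V - sp.card := by
      rw [← Finset.card_union_of_disjoint hdisj]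
      have hsub : Ou ∪ Ov ⊆ spᶜ := by
        intro t ht
        rw [Finset.mem_compl]
        rcases Finset.mem_union.mp ht with h | h
        · exact (Finset.mem_sdiff.mp h).2
        · exact (Finset.mem_sdiff.mp h).2
      calc (Ou ∪ Ov).card ≤ spᶜ.card := Finset.card_le_card hsub
      _ = Fintype.card V - sp.card := Finset.card_compl sp
    have hsple : sp.card ≤ Fintype.card V := by
      apply Finset.card_le_card (Finset.subset_univ sp) |>.trans
      simp
    have hAB : sp.card ≤ A.card + B.card := by omega
    -- darts
    set DA := P.darts.toFinset.filter (fun d => H.Adj v d.fst) with hDA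
    have hfstnd : (P.darts.map (·.fst)).Nodup := by
      rw [Walk.map_fst_darts]
      exact hP.support_nodup.sublist (List.dropLast_sublist _)
    have hsndnd : (P.darts.map (·.snd)).Nodup := by
      rw [Walk.map_snd_darts]
      exact hP.support_nodup.tail
    have hDAfst : DA.image (·.fst) = A := by
      ext x
      simp only [hDA, Finset.mem_image, Finset.mem_filter, List.mem_toFinset, hA,
        Finset.mem_inter, SimpleGraph.mem_neighborFinset, hsp, List.mem_toFinset]
      constructor
      · rintro ⟨d, ⟨hd, hadj⟩, rfl⟩
        exact ⟨hadj, Walk.dart_fst_mem_support_of_mem_darts _ hd⟩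
      · rintro ⟨hadj, hmem⟩
        obtain ⟨d, hd, hdx⟩ := exists_dart_fst P hmem hadj.ne'
        exact ⟨d, ⟨hd, by rw [hdx]; exact hadj⟩, hdx⟩
    have hDAcard : DA.card = A.card := by
      rw [← hDAfst]
      refine (Finset.card_image_of_injOn ?_).symm
      intro d1 h1 d2 h2 hf
      have m1 := (Finset.mem_filter.mp h1).1
      have m2 := (Finset.mem_filter.mp h2).1
      rw [List.mem_toFinset] at m1 m2
      exact List.inj_on_of_nodup_map hfstnd m1 m2 hf
    set SA := DA.image (·.snd) with hSA
    have hSAcard : SA.card = A.card := by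
      rw [hSA, ← hDAcard]
      refine Finset.card_image_of_injOn ?_
      intro d1 h1 d2 h2 hf
      have m1 := (Finset.mem_filter.mp h1).1
      have m2 := (Finset.mem_filter.mp h2).1
      rw [List.mem_toFinset] at m1 m2
      exact List.inj_on_of_nodup_map hsndnd m1 m2 hf
    have hSAsub : SA ⊆ sp.erase u := by
      intro z hz
      rw [hSA, Finset.mem_image] at hz
      obtain ⟨d, hd, rfl⟩ := hz
      have hdm := (Finset.mem_filter.mp hd).1
      rw [List.mem_toFinset] at hdm
      rw [Finset.mem_erase]
      constructor
      · intro hc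
        have : d.snd ∈ P.darts.map (·.snd) := List.mem_map_of_mem hdm
        rw [Walk.map_snd_darts] at this
        have h2 := hP.support_nodup
        rw [P.support_eq_cons, List.nodup_cons] at h2
        exact h2.1 (hc ▸ this)
      · rw [hsp, List.mem_toFinset]
        exact Walk.dart_snd_mem_support_of_mem_darts _ hdm
    have hBsub : B ⊆ sp.erase u := by
      intro z hz
      rw [hB, Finset.mem_inter, SimpleGraph.mem_neighborFinset] at hz
      exact Finset.mem_erase.mpr ⟨hz.1.ne', hz.2⟩
    have hnodisj : ¬Disjoint SA B := by
      intro hd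
      have := Finset.card_union_of_disjoint hd ▸
        Finset.card_le_card (Finset.union_subset hSAsub hBsub)
      rw [Finset.card_erase_of_mem (by rw [hsp, List.mem_toFinset]; exact P.start_mem_support)]
        at this
      omega
    obtain ⟨z, hzSA, hzB⟩ := Finset.not_disjoint_iff.mp hnodisj
    rw [hSA, Finset.mem_image] at hzSA
    obtain ⟨d, hdDA, hdz⟩ := hzSA
    have hdmem : d ∈ P.darts := by
      have := (Finset.mem_filter.mp hdDA).1
      rwa [List.mem_toFinset] at this
    have hvx : H.Adj v d.fst := (Finset.mem_filter.mp hdDA).2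
    have huz : H.Adj u z := by
      rw [hB, Finset.mem_inter, SimpleGraph.mem_neighborFinset] at hzB
      exact hzB.1
    subst hdz
    -- split the path at the dart
    obtain ⟨P₁, P₂, hsplit⟩ := split_at_dart P hdmem
    have hsupp : P.support = P₁.support ++ P₂.support := by
      rw [hsplit, Walk.support_append, Walk.support_cons]
      rfl
    have hnd : (P₁.support ++ P₂.support).Nodup := hsupp ▸ hP.support_nodup
    have hdisj12 : P₁.support.Disjoint P₂.support := List.disjoint_of_nodup_append hnd
    have hu1 : u ∈ P₁.support := P₁.start_mem_support
    have hz2 : d.snd ∈ P₂.support := P₂.start_mem_support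
    have hv2 : v ∈ P₂.support := P₂.end_mem_support
    have hx1 : d.fst ∈ P₁.support := P₁.end_mem_support
    have hzv : d.snd ≠ v := fun hc => hnadj (hc ▸ huz)
    -- the new cycle
    set Q : H.Walk d.snd u := P₂.append (Walk.cons hvx P₁.reverse) with hQ
    have hQsupp : Q.support = P₂.support ++ P₁.support.reverse := by
      rw [hQ, Walk.support_append, Walk.support_cons, Walk.support_reverse]
      rfl
    have hQpath : Q.IsPath := by
      apply Walk.IsPath.mk'
      rw [hQsupp, List.nodup_append']
      refine ⟨(List.nodup_append.mp hnd).2.1, by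
        rw [List.nodup_reverse]; exact (List.nodup_append.mp hnd).1, ?_⟩
      intro t ht1 ht2
      rw [List.mem_reverse] at ht2
      exact hdisj12 ht2 ht1
    have he : s(u, d.snd) ∉ Q.edges := by
      rw [hQ, Walk.edges_append, Walk.edges_cons]
      intro hmem
      rcases List.mem_append.mp hmem with hmem | hmem
      · exact hdisj12 hu1 (Walk.fst_mem_support_of_mem_edges P₂ hmem)
      · rcases List.mem_cons.mp hmem with hmem | hmem
        · rw [Sym2.eq_iff] at hmem
          rcases hmem with ⟨h1, -⟩ | ⟨-, h2⟩
          · exact hne h1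
          · exact hzv h2
        · rw [Walk.edges_reverse, List.mem_reverse] at hmem
          exact hdisj12 (Walk.snd_mem_support_of_mem_edges P₁ hmem) hz2
    refine ⟨u, Walk.cons huz Q, SimpleGraph.Path.cons_isCycle ⟨Q, hQpath⟩ huz he, ?_⟩
    intro t ht
    rw [Walk.support_cons, List.mem_cons]
    rw [hsupp, List.mem_append] at ht
    rw [hQsupp]
    rcases ht with ht | ht
    · right; rw [List.mem_append, List.mem_reverse]; right; exact ht
    · right; rw [List.mem_append]; left; exact ht

lemma end_mem_support_tail {H : SimpleGraph V} {x y : V} (p : H.Walk x y) (hp : ¬p.Nil) :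
    y ∈ p.support.tail := by
  cases p with
  | nil => exact absurd Walk.nil_nil hp
  | cons h q => simpa using q.end_mem_support

/-- Bondy–Chvátal style closure step: a cycle in `H ⊔ edge u v` covering a set can be
replaced by a cycle in `H` covering it, provided `deg u + deg v ≥ n`. -/
lemma closure_step {H : SimpleGraph V} [DecidableRel H.Adj] {u v : V}
    (hne : u ≠ v) (hnadj : ¬H.Adj u v)
    (hdeg : Fintype.card V ≤ H.degree u + H.degree v)
    {a : V} {C : (H ⊔ SimpleGraph.edge u v).Walk a a} (hC : C.IsCycle) :
    ∃ (b : V) (c : H.Walk b b), c.IsCycle ∧ ∀ x ∈ C.support, x ∈ c.support := by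
  classical
  have hedge : ∀ e ∈ (H ⊔ SimpleGraph.edge u v).edgeSet, e ≠ s(u, v) → e ∈ H.edgeSet := by
    intro e he hene
    rw [SimpleGraph.edgeSet_sup] at he
    rcases he with he | he
    · exact he
    · rw [SimpleGraph.edge_edgeSet_of_ne hne] at he
      exact absurd he hene
  rcases em (s(u, v) ∈ C.edges) with huv | huv
  swap
  · -- the extra edge is unused: transfer the cycle
    have hsub : ∀ e ∈ C.edges, e ∈ H.edgeSet := by
      intro e he
      exact hedge e (C.edges_subset_edgeSet he) (fun hc => huv (hc ▸ he))
    exact ⟨a, C.transfer H hsub, hC.transfer hsub, by rw [Walk.support_transfer]; tauto⟩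
  · -- extract a u-v Hamiltonian-ish path and rotate
    have hu : u ∈ C.support := Walk.fst_mem_support_of_mem_edges C huv
    set R := C.rotate u hu with hR
    have hRC : R.IsCycle := hC.rotate hu
    have hRuv : s(u, v) ∈ R.edges := by
      rw [(C.rotate_edges u hu).mem_iff]; exact huv
    have hcov : ∀ x ∈ C.support, x ∈ R.support := by
      intro x hx
      rw [Walk.support_eq_cons C] at hx
      rcases List.mem_cons.mp hx with rfl | hx
      · -- x = a : a is also the last vertex, which lies in the tail of C's support
        have ha : x ∈ C.support.tail := end_mem_support_tail C (by
          intro hnil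
          exact hC.ne_nil (Walk.nil_iff_eq_nil.mp hnil))
        have := (Walk.support_rotate C u hu).mem_iff.mpr ha
        rw [Walk.support_eq_cons R]
        exact List.mem_cons_of_mem _ this
      · have := (Walk.support_rotate C u hu).mem_iff.mpr hx
        rw [Walk.support_eq_cons R]
        exact List.mem_cons_of_mem _ this
    clear_value R
    -- now build path from u to v in H covering R.support
    suffices hsuff : ∃ P : H.Walk u v, P.IsPath ∧ ∀ x ∈ R.support, x ∈ P.support by
      obtain ⟨P, hPp, hPc⟩ := hsuff
      obtain ⟨b, c, hcyc, hccov⟩ := shi_rotation P hPp hne hnadj hdeg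
      exact ⟨b, c, hcyc, fun x hx => hccov x (hPc x (hcov x hx))⟩
    cases R with
    | nil => exact absurd rfl hRC.ne_nil
    | @cons _ w _ hadj T =>
      have hTnd : T.support.Nodup := by
        have := hRC.support_nodup
        simpa using this
      have hTpath : T.IsPath := Walk.IsPath.mk' hTnd
      have hTedge : s(u, w) ∉ T.edges := by
        have := hRC.isTrail.edges_nodup
        rw [Walk.edges_cons] at this
        exact (List.nodup_cons.mp this).1
      rcases em (w = v) with rfl | hwv
      · -- first edge of the cycle is u-v
        refine ⟨T.reverse.transfer H ?_, ?_, ?_⟩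
        · intro e he
          rw [Walk.edges_reverse, List.mem_reverse] at he
          refine hedge e (T.edges_subset_edgeSet he) ?_
          intro hc
          exact hTedge (hc ▸ he)
        · exact (hTpath.reverse).transfer _
        · intro x hx
          rw [Walk.support_transfer, Walk.support_reverse, List.mem_reverse]
          rw [Walk.support_cons] at hx
          rcases List.mem_cons.mp hx with rfl | hx
          · exact T.end_mem_support
          · exact hx
      · -- the edge u-v is inside T
        have hTuv : s(u, v) ∈ T.edges := by
          rw [Walk.edges_cons] at hRuv
          rcases List.mem_cons.mp hRuv with h | h
          · rw [Sym2.eq_iff] at h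
            rcases h with ⟨-, h2⟩ | ⟨h1, -⟩
            · exact absurd h2.symm hwv
            · exact absurd h1 hadj.ne
          · exact h
        obtain ⟨q, hq, hTeq⟩ := path_concat_of_mem_edges T hTpath hTuv
        have huq : u ∉ q.support := by
          have := hTnd
          rw [hTeq, Walk.support_concat, List.nodup_append'] at this
          intro hc
          exact this.2.2 hc (by simp)
        have hqnd : q.support.Nodup := by
          have := hTnd
          rw [hTeq, Walk.support_concat, List.nodup_append'] at this
          exact this.1
        refine ⟨(Walk.cons hadj q).transfer H ?_, ?_, ?_⟩
        · intro e he
          rw [Walk.edges_cons] at he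
          rcases List.mem_cons.mp he with rfl | he
          · refine hedge _ (by rw [SimpleGraph.mem_edgeSet]; exact hadj) ?_
            intro hc
            rw [Sym2.eq_iff] at hc
            rcases hc with ⟨-, h2⟩ | ⟨h1, -⟩
            · exact hwv h2
            · exact hne h1
          · refine hedge _ (q.edges_subset_edgeSet he) ?_
            intro hc
            subst hc
            exact huq (Walk.fst_mem_support_of_mem_edges q he)
        · refine Walk.IsPath.transfer _ ?_
          apply Walk.IsPath.mk'
          rw [Walk.support_cons, List.nodup_cons]
          exact ⟨huq, hqnd⟩
        · intro x hx
          rw [Walk.support_transfer, Walk.support_cons]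
          rw [Walk.support_cons] at hx
          rcases List.mem_cons.mp hx with rfl | hx
          · simp
          · rw [hTeq, Walk.support_concat, List.mem_append] at hx
            rcases hx with hx | hx
            · exact List.mem_cons_of_mem _ hx
            · simp only [List.mem_singleton] at hx
              subst hx
              simp

lemma degree_mono {G H : SimpleGraph V} [DecidableRel G.Adj] [DecidableRel H.Adj]
    (hle : G ≤ H) (x : V) : G.degree x ≤ H.degree x := by
  apply Finset.card_le_card
  intro w hw
  rw [SimpleGraph.mem_neighborFinset] at hw ⊢
  exact hle hw

lemma final_case {G H : SimpleGraph V} [DecidableRel G.Adj] [DecidableRel H.Adj]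
    (h2 : G.TwoConnected) (hle : G ≤ H)
    (hnoadd : ¬∃ u v : V, u ≠ v ∧ ¬H.Adj u v ∧
      Fintype.card V ≤ H.degree u + H.degree v) :
    ∃ (b : V) (c : H.Walk b b), c.IsCycle ∧
      ∀ x : V, Fintype.card V ≤ 2 * G.degree x → x ∈ c.support := by
  classical
  have hH2 : H.TwoConnected := twoConnected_mono hle h2
  set T : Finset V := Finset.univ.filter (fun x => Fintype.card V ≤ 2 * G.degree x) with hT
  have hmemT : ∀ x : V, x ∈ T ↔ Fintype.card V ≤ 2 * G.degree x := by
    intro x; rw [hT, Finset.mem_filter]; simp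
  have hclq : ∀ x ∈ T, ∀ y ∈ T, x ≠ y → H.Adj x y := by
    intro x hx y hy hxy
    by_contra hnadj
    refine hnoadd ⟨x, y, hxy, hnadj, ?_⟩
    have hx' := (hmemT x).mp hx
    have hy' := (hmemT y).mp hy
    have h1 := degree_mono hle x
    have h2' := degree_mono hle y
    omega
  rcases Nat.lt_or_ge T.card 3 with h3 | h3
  · have : T.card = 0 ∨ T.card = 1 ∨ T.card = 2 := by omega
    rcases this with h | h | h
    · have hne : Nonempty V := Fintype.card_pos_iff.mp (by have := h2.1; omega)
      obtain ⟨u⟩ := hne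
      obtain ⟨b, c, hc, -⟩ := cycle_through_vertex hH2 u
      refine ⟨b, c, hc, ?_⟩
      intro x hx
      exact absurd (Finset.card_eq_zero.mp h ▸ (hmemT x).mpr hx) (Finset.notMem_empty x)
    · obtain ⟨z, hz⟩ := Finset.card_eq_one.mp h
      obtain ⟨b, c, hc, hcz⟩ := cycle_through_vertex hH2 z
      refine ⟨b, c, hc, ?_⟩
      intro x hx
      have : x ∈ T := (hmemT x).mpr hx
      rw [hz, Finset.mem_singleton] at this
      exact this ▸ hcz
    · obtain ⟨z, w, hzw, hT2⟩ := Finset.card_eq_two.mp h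
      have hzT : z ∈ T := by rw [hT2]; simp
      have hwT : w ∈ T := by rw [hT2]; simp
      obtain ⟨b, c, hc, hcz, hcw⟩ := cycle_through_two hH2 (hclq z hzT w hwT hzw)
      refine ⟨b, c, hc, ?_⟩
      intro x hx
      have : x ∈ T := (hmemT x).mpr hx
      rw [hT2, Finset.mem_insert, Finset.mem_singleton] at this
      rcases this with rfl | rfl
      · exact hcz
      · exact hcw
  · obtain ⟨b, c, hc, hcov⟩ := cycle_of_clique h3 hclq
    exact ⟨b, c, hc, fun x hx => hcov x ((hmemT x).mpr hx)⟩

lemma closure_induction {G : SimpleGraph V} [DecidableRel G.Adj] (h2 : G.TwoConnected) :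
    ∀ (k : ℕ) (H : SimpleGraph V) [DecidableRel H.Adj], G ≤ H →
      (Hᶜ.edgeSet.ncard ≤ k) →
      ∃ (b : V) (c : H.Walk b b), c.IsCycle ∧
        ∀ x : V, Fintype.card V ≤ 2 * G.degree x → x ∈ c.support := by
  intro k
  induction k with
  | zero =>
    intro H inst hle hcard
    refine final_case h2 hle ?_
    rintro ⟨u, v, hne, hnadj, -⟩
    have : s(u, v) ∈ Hᶜ.edgeSet := by
      rw [SimpleGraph.mem_edgeSet, SimpleGraph.compl_adj]
      exact ⟨hne, hnadj⟩
    have hpos : 0 < Hᶜ.edgeSet.ncard := by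
      rw [Set.ncard_pos (Hᶜ.edgeSet.toFinite)]
      exact ⟨_, this⟩
    omega
  | succ k ih =>
    intro H inst hle hcard
    rcases em (∃ u v : V, u ≠ v ∧ ¬H.Adj u v ∧
        Fintype.card V ≤ H.degree u + H.degree v) with ⟨u, v, hne, hnadj, hdeg⟩ | hnoadd
    · letI : DecidableRel (H ⊔ SimpleGraph.edge u v).Adj := Classical.decRel _
      have hle' : G ≤ H ⊔ SimpleGraph.edge u v := hle.trans le_sup_left
      have hssub : (H ⊔ SimpleGraph.edge u v)ᶜ.edgeSet ⊂ Hᶜ.edgeSet := by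
        constructor
        · intro e he
          induction e with
          | _ a b =>
            rw [SimpleGraph.mem_edgeSet, SimpleGraph.compl_adj] at he ⊢
            exact ⟨he.1, fun hc => he.2 (sup_adj _ _ _ _ |>.mpr (Or.inl hc))⟩
        · intro hsub
          have h1 : s(u, v) ∈ Hᶜ.edgeSet := by
            rw [SimpleGraph.mem_edgeSet, SimpleGraph.compl_adj]
            exact ⟨hne, hnadj⟩
          have h2' := hsub h1
          rw [SimpleGraph.mem_edgeSet, SimpleGraph.compl_adj] at h2'
          exact h2'.2 (sup_adj _ _ _ _ |>.mpr (Or.inr (by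
            rw [SimpleGraph.edge_adj]
            exact ⟨Or.inl ⟨rfl, rfl⟩, hne⟩)))
      have hcard' : (H ⊔ SimpleGraph.edge u v)ᶜ.edgeSet.ncard ≤ k := by
        have := Set.ncard_lt_ncard hssub (Hᶜ.edgeSet.toFinite)
        omega
      obtain ⟨b, C, hC, hcovC⟩ := ih (H ⊔ SimpleGraph.edge u v) hle' hcard'
      obtain ⟨b', c', hc', hcov'⟩ := closure_step hne hnadj hdeg hC
      exact ⟨b', c', hc', fun x hx => hcov' x (hcovC x hx)⟩
    · exact final_case h2 hle hnoadd

end ShiProof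

/-- (Shi, 1992) A `2`-connected simple graph of order `n` contains a cycle
passing through all vertices of degree at least `n / 2`. -/
theorem cycle_through_large_degree_vertices
    {V : Type*} [Fintype V] [DecidableEq V]
    (G : SimpleGraph V) [DecidableRel G.Adj]
    (h2 : G.TwoConnected) :
    ∃ (a : V) (C : G.Walk a a), C.IsCycle ∧
      ∀ v : V, Fintype.card V ≤ 2 * G.degree v → v ∈ C.support := by
  obtain ⟨a, C, hC, hcov⟩ := closure_induction h2 (Gᶜ.edgeSet.ncard) G le_rfl le_rfl
  exact ⟨a, C, hC, hcov⟩
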